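/- For every u ∈ ℝ^E, every real λ < 1, and every p ∈ ℝ^E, one has ‖p − u‖₂² − λ‖p‖₂² = (1 − λ)·‖p − u/(1 − λ)‖₂² − λ‖u‖₂²/(1 − λ); consequently, the Sparsegen routing output sparsegen(u, λ) equals the Euclidean (metric) projection of the point u/(1 − λ) onto the probability simplex Δ. -/

import Mathlib

noncomputable section

/-- The probability simplex in `ℝ^E`. -/
def simplex (E : ℕ) : Set (EuclideanSpace ℝ (Fin E)) :=
  {p | (∀ i, 0 ≤ p i) ∧ ∑ i, p i = 1}

/-- The Sparsegen objective `g_{u,λ}(p) = ‖p − u‖₂² − λ‖p‖₂²`. -/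
def sparsegenObj {E : ℕ} (u : EuclideanSpace ℝ (Fin E)) (lam : ℝ)
    (p : EuclideanSpace ℝ (Fin E)) : ℝ :=
  ‖p - u‖ ^ 2 - lam * ‖p‖ ^ 2

/-- For every `u ∈ ℝ^E`, `λ < 1` and `p ∈ ℝ^E`, one has
`‖p − u‖² − λ‖p‖² = (1 − λ)‖p − u/(1 − λ)‖² − λ‖u‖²/(1 − λ)`; consequently the
Sparsegen routing output (the unique minimizer of the objective over the simplex)
is the Euclidean metric projection of `u/(1 − λ)` onto the simplex. -/
theorem sparsegen_eq_projection (E : ℕ) (hE : 1 ≤ E)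
    (u : EuclideanSpace ℝ (Fin E)) (lam : ℝ) (hlam : lam < 1) :
    (∀ p : EuclideanSpace ℝ (Fin E),
        sparsegenObj u lam p
          = (1 - lam) * ‖p - (1 - lam)⁻¹ • u‖ ^ 2 - lam * ‖u‖ ^ 2 / (1 - lam)) ∧
    (∀ p : EuclideanSpace ℝ (Fin E),
        p ∈ simplex E → IsMinOn (sparsegenObj u lam) (simplex E) p →
          IsMinOn (fun q => ‖q - (1 - lam)⁻¹ • u‖) (simplex E) p) := by
  have hpos : (0:ℝ) < 1 - lam := by linarith
  have hne : (1 - lam) ≠ 0 := ne_of_gt hpos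
  have key : ∀ p : EuclideanSpace ℝ (Fin E),
      sparsegenObj u lam p
        = (1 - lam) * ‖p - (1 - lam)⁻¹ • u‖ ^ 2 - lam * ‖u‖ ^ 2 / (1 - lam) := by
    intro p
    have h1 : ‖p - u‖ ^ 2 = ‖p‖ ^ 2 - 2 * inner ℝ p u + ‖u‖ ^ 2 :=
      norm_sub_sq_real p u
    have h2 : ‖p - (1 - lam)⁻¹ • u‖ ^ 2
        = ‖p‖ ^ 2 - 2 * ((1 - lam)⁻¹ * inner ℝ p u) + ((1 - lam)⁻¹) ^ 2 * ‖u‖ ^ 2 := by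
      rw [norm_sub_sq_real, real_inner_smul_right, norm_smul]
      simp [abs_of_pos (inv_pos.mpr hpos), mul_pow]
    simp only [sparsegenObj, h1, h2]
    field_simp
    ring
  refine ⟨key, ?_⟩
  intro p hp hmin q hq
  have h := hmin hq
  simp only [key, Set.mem_setOf_eq] at h
  have h2 : ‖p - (1 - lam)⁻¹ • u‖ ^ 2 ≤ ‖q - (1 - lam)⁻¹ • u‖ ^ 2 :=
    (mul_le_mul_iff_right₀ hpos).mp (by linarith)
  simp only [Set.mem_setOf_eq]
  nlinarith [norm_nonneg (p - (1 - lam)⁻¹ • u), norm_nonneg (q - (1 - lam)⁻¹ • u)]
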